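/- arXiv:2108.11241 — 3 statements merged into one kernel-verified Lean document; each statement's English description precedes it below -/
import Mathlib

section
/- Let A be a commutative ring and let (a,b) ∈ A² be a unimodular row. The following are equivalent: (1) there exist a₀, …, aₙ ∈ A such that the class of (a,b) equals ∞·S(aₙ)S(aₙ₋₁)···S(a₀); (2) the pair (a,b) satisfies a weak Euclidean algorithm, i.e. there exist a₀, …, aₙ ∈ A and r₀, …, rₙ₋₁ ∈ A such that, setting r₋₂ := a, r₋₁ := b and rₙ := 0, one has r_{k−2} = a_k r_{k−1} + r_k for all 0 ≤ k ≤ n. -/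
open Matrix

/-- A row `(a,b) ∈ A²` is unimodular if `∃ r s, r*a + s*b = 1`. -/
def IsUnimod {A : Type*} [CommRing A] (v : Fin 2 → A) : Prop :=
  ∃ r s : A, r * v 0 + s * v 1 = 1

/-- Unimodular rows of length 2. -/
abbrev UnimodRow (A : Type*) [CommRing A] := {v : Fin 2 → A // IsUnimod v}

/-- Two unimodular rows are equivalent if they differ by multiplication by a unit. -/
instance vertexSetoid (A : Type*) [CommRing A] : Setoid (UnimodRow A) where
  r v w := ∃ u : Aˣ, (u : A) • v.1 = w.1
  iseqv := by
    refine ⟨fun v => ⟨1, by simp⟩, ?_, ?_⟩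
    · rintro v w ⟨u, h⟩
      exact ⟨u⁻¹, by rw [← h, smul_smul, Units.inv_mul, one_smul]⟩
    · rintro v w z ⟨u, h⟩ ⟨u', h'⟩
      exact ⟨u' * u, by rw [← h', ← h, smul_smul, ← Units.val_mul]⟩

/-- The vertices of the graph Γ(A): unimodular rows up to multiplication by a unit. -/
def Vertex (A : Type*) [CommRing A] := Quotient (vertexSetoid A)

/-- The graph Γ(A). -/
def GammaGraph (A : Type*) [CommRing A] : SimpleGraph (Vertex A) where
  Adj x y := x ≠ y ∧ ∃ v w : UnimodRow A, x = ⟦v⟧ ∧ y = ⟦w⟧ ∧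
    IsUnit (v.1 0 * w.1 1 - v.1 1 * w.1 0)
  symm := by
    refine ⟨?_⟩
    rintro x y ⟨hne, v, w, hx, hy, hd⟩
    refine ⟨hne.symm, w, v, hy, hx, ?_⟩
    have h : w.1 0 * v.1 1 - w.1 1 * v.1 0 = -(v.1 0 * w.1 1 - v.1 1 * w.1 0) := by ring
    rw [h]
    exact hd.neg
  loopless := ⟨fun x h => h.1 rfl⟩

theorem isUnimod_vecMul {A : Type*} [CommRing A] {v : Fin 2 → A} (h : IsUnimod v)
    (M : GL (Fin 2) A) : IsUnimod (vecMul v (M : Matrix (Fin 2) (Fin 2) A)) := by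
  obtain ⟨r, s, hrs⟩ := h
  set w : Fin 2 → A := ((M⁻¹ : GL (Fin 2) A) : Matrix (Fin 2) (Fin 2) A) *ᵥ ![r, s] with hw
  refine ⟨w 0, w 1, ?_⟩
  have h1 : vecMul v (M : Matrix (Fin 2) (Fin 2) A) ⬝ᵥ w = v ⬝ᵥ ![r, s] := by
    rw [hw, ← dotProduct_mulVec, mulVec_mulVec, Units.mul_inv, one_mulVec]
  simp only [dotProduct, Fin.sum_univ_two] at h1
  simp only [Matrix.cons_val_zero, Matrix.cons_val_one, Matrix.head_cons] at h1
  linear_combination h1 + hrs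

/-- The right action of GL₂(A) on the vertices of Γ(A). -/
def vertexMul {A : Type*} [CommRing A] (x : Vertex A) (M : GL (Fin 2) A) : Vertex A :=
  Quotient.map (fun v => ⟨vecMul v.1 (M : Matrix (Fin 2) (Fin 2) A), isUnimod_vecMul v.2 M⟩)
    (by
      rintro v w ⟨u, h⟩
      refine ⟨u, ?_⟩
      show (u : A) • (vecMul v.1 (M : Matrix (Fin 2) (Fin 2) A)) =
        vecMul w.1 (M : Matrix (Fin 2) (Fin 2) A)
      rw [← h, Matrix.smul_vecMul]) x

/-- The vertex ∞ = [(1,0)]. -/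
def vInf (A : Type*) [CommRing A] : Vertex A := ⟦⟨![1, 0], ⟨1, 0, by norm_num⟩⟩⟧

/-- The vertex 0 = [(0,1)]. -/
def vZero (A : Type*) [CommRing A] : Vertex A := ⟦⟨![0, 1], ⟨0, 1, by norm_num⟩⟩⟧

/-- The vertex 1 = [(1,1)]. -/
def vOne (A : Type*) [CommRing A] : Vertex A := ⟦⟨![1, 1], ⟨1, 0, by norm_num⟩⟩⟧
open Matrix

/-- E(a) = [[a,1],[-1,0]] as an element of GL₂. -/
def Egl {A : Type*} [CommRing A] (a : A) : GL (Fin 2) A :=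
  ⟨!![a, 1; -1, 0], !![0, -1; 1, a],
    by ext i j; fin_cases i <;> fin_cases j <;> simp [Matrix.mul_apply, Fin.sum_univ_two],
    by ext i j; fin_cases i <;> fin_cases j <;> simp [Matrix.mul_apply, Fin.sum_univ_two]⟩

/-- S(a) = [[a,1],[1,0]] as an element of GL₂. -/
def Sgl {A : Type*} [CommRing A] (a : A) : GL (Fin 2) A :=
  ⟨!![a, 1; 1, 0], !![0, 1; 1, -a],
    by ext i j; fin_cases i <;> fin_cases j <;> simp [Matrix.mul_apply, Fin.sum_univ_two],
    by ext i j; fin_cases i <;> fin_cases j <;> simp [Matrix.mul_apply, Fin.sum_univ_two]⟩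

/-- The elementary matrix E₁₂(a) = [[1,a],[0,1]] in GL₂. -/
def E12gl {A : Type*} [CommRing A] (a : A) : GL (Fin 2) A :=
  ⟨!![1, a; 0, 1], !![1, -a; 0, 1],
    by ext i j; fin_cases i <;> fin_cases j <;> simp [Matrix.mul_apply, Fin.sum_univ_two],
    by ext i j; fin_cases i <;> fin_cases j <;> simp [Matrix.mul_apply, Fin.sum_univ_two]⟩

/-- The elementary matrix E₂₁(a) = [[1,0],[a,1]] in GL₂. -/
def E21gl {A : Type*} [CommRing A] (a : A) : GL (Fin 2) A :=
  ⟨!![1, 0; a, 1], !![1, 0; -a, 1],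
    by ext i j; fin_cases i <;> fin_cases j <;> simp [Matrix.mul_apply, Fin.sum_univ_two],
    by ext i j; fin_cases i <;> fin_cases j <;> simp [Matrix.mul_apply, Fin.sum_univ_two]⟩

/-- GE₂(A): the subgroup of GL₂(A) generated by the elementary matrices and the
invertible diagonal matrices. -/
def GE2 (A : Type*) [CommRing A] : Subgroup (GL (Fin 2) A) :=
  Subgroup.closure
    ({M | ∃ a : A, M = E12gl a} ∪ {M | ∃ a : A, M = E21gl a} ∪
      {M | (M : Matrix (Fin 2) (Fin 2) A) 0 1 = 0 ∧ (M : Matrix (Fin 2) (Fin 2) A) 1 0 = 0})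

/-- Given `f : A → G` and a tuple `(a 0, …, a (n-1))`, the product
`f (a (n-1)) * ⋯ * f (a 1) * f (a 0)` (rightmost factor first). -/
def wordProd {A : Type*} {G : Type*} [Monoid G] (f : A → G) :
    {n : ℕ} → (Fin n → A) → G
  | 0, _ => 1
  | n + 1, a => f (a (Fin.last n)) * wordProd f (fun j : Fin n => a j.castSucc)

/-- The pair (a,b) satisfies a weak Euclidean algorithm: there are a₀,…,aₙ and
r₀,…,r_{n-1} such that, with r₋₂ := a, r₋₁ := b and rₙ := 0, one has
r_{k-2} = a_k r_{k-1} + r_k for 0 ≤ k ≤ n.  (Here `r (k+2)` plays the role of `r_k`.) -/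
def WeakEuclidean {A : Type*} [CommRing A] (a b : A) : Prop :=
  ∃ (n : ℕ) (q : Fin (n + 1) → A) (r : ℕ → A),
    r 0 = a ∧ r 1 = b ∧ r (n + 2) = 0 ∧
    ∀ k : Fin (n + 1), r k.1 = q k * r (k.1 + 1) + r (k.1 + 2)

lemma wordProd_peel {A G : Type*} [Monoid G] (f : A → G) :
    ∀ (n : ℕ) (c : Fin (n + 1) → A),
      wordProd f c = wordProd f (fun j : Fin n => c j.succ) * f (c 0)
  | 0, c => by simp [wordProd]
  | n + 1, c => by
    show f (c (Fin.last (n + 1))) * wordProd f (fun j : Fin (n + 1) => c j.castSucc) = _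
    rw [wordProd_peel f n (fun j : Fin (n + 1) => c j.castSucc)]
    show _ = f ((fun j : Fin (n+1) => c j.succ) (Fin.last n)) *
        wordProd f (fun j : Fin n => (fun j : Fin (n+1) => c j.succ) j.castSucc) * f (c 0)
    simp only [Fin.succ_last, Fin.castSucc_zero, Fin.succ_castSucc, mul_assoc]

lemma row_eval {A : Type*} [CommRing A] (a : A) (v : Fin 2 → A) :
    vecMul v ((Sgl a : GL (Fin 2) A) : Matrix (Fin 2) (Fin 2) A) = ![v 0 * a + v 1, v 0] := by
  funext i
  fin_cases i <;>
    simp [Sgl, vecMul, dotProduct, Fin.sum_univ_two]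

lemma key_lemma {A : Type*} [CommRing A] :
    ∀ (n : ℕ) (c : Fin (n + 1) → A), ∃ r : ℕ → A,
      r (n + 1) = 1 ∧ r (n + 2) = 0 ∧
      vecMul ![(1:A), 0] ((wordProd Sgl c : GL (Fin 2) A) : Matrix (Fin 2) (Fin 2) A)
        = ![r 0, r 1] ∧
      ∀ k : Fin (n + 1), r k.1 = c k * r (k.1 + 1) + r (k.1 + 2)
  | 0, c => by
    refine ⟨fun k => if k = 0 then c 0 else if k = 1 then 1 else 0, by norm_num, by norm_num,
      ?_, ?_⟩
    · have hw : wordProd Sgl c = Sgl (c 0) := by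
        simp [wordProd]
      rw [hw, row_eval]
      norm_num
    · intro k
      fin_cases k
      norm_num
  | n + 1, c => by
    obtain ⟨r', e1, e0, hvec, hrel⟩ := key_lemma n (fun j => c j.succ)
    refine ⟨fun k => match k with | 0 => c 0 * r' 0 + r' 1 | (k+1) => r' k,
      e1, e0, ?_, ?_⟩
    · rw [wordProd_peel, Units.val_mul, ← vecMul_vecMul, hvec, row_eval]
      have : r' 0 * c 0 = c 0 * r' 0 := mul_comm _ _
      funext i
      fin_cases i <;> simp <;> ring
    · intro k
      refine Fin.cases ?_ ?_ k
      · simp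
      · intro j
        have := hrel j
        simpa using this

/-- For a unimodular row (a,b): the class of (a,b) equals
∞·S(aₙ)⋯S(a₀) for some a₀,…,aₙ ∈ A iff (a,b) satisfies a weak Euclidean algorithm. -/
theorem stmt8 (A : Type*) [CommRing A] (a b : A) (h : IsUnimod ![a, b]) :
    (∃ (n : ℕ) (c : Fin (n + 1) → A),
      (⟦(⟨![a, b], h⟩ : UnimodRow A)⟧ : Vertex A) = vertexMul (vInf A) (wordProd Sgl c)) ↔
    WeakEuclidean a b := by
  classical
  constructor
  · rintro ⟨n, c, hc⟩
    obtain ⟨r', e1, e0, hvec, hrel⟩ := key_lemma n c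
    rw [vertexMul, vInf, Quotient.map_mk, Quotient.eq] at hc
    obtain ⟨u, hu⟩ := hc
    have ha : (u : A) * a = r' 0 := by
      have t := (congrFun hu 0).trans (congrFun hvec 0); simpa using t
    have hb : (u : A) * b = r' 1 := by
      have t := (congrFun hu 1).trans (congrFun hvec 1); simpa using t
    refine ⟨n, c, fun k => (↑u⁻¹ : A) * r' k, ?_, ?_, ?_, ?_⟩
    · show (↑u⁻¹ : A) * r' 0 = a
      rw [← ha, ← mul_assoc]; simp
    · show (↑u⁻¹ : A) * r' 1 = b
      rw [← hb, ← mul_assoc]; simp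
    · show (↑u⁻¹ : A) * r' (n + 2) = 0
      rw [e0, mul_zero]
    · intro k
      show (↑u⁻¹ : A) * r' k.1 = c k * ((↑u⁻¹ : A) * r' (k.1 + 1)) + (↑u⁻¹ : A) * r' (k.1 + 2)
      linear_combination (↑u⁻¹ : A) * hrel k
  · rintro ⟨n, q, r, h0, h1, hz, hrel⟩
    obtain ⟨r', e1, e0, hvec, hrel'⟩ := key_lemma n q
    have H : ∀ m k, k + m = n + 2 → r k = r (n + 1) * r' k := by
      intro m
      induction m using Nat.strong_induction_on with
      | _ m ih =>
        intro k hk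
        match m, hk with
        | 0, hk =>
          have : k = n + 2 := by omega
          subst this
          rw [hz, e0, mul_zero]
        | 1, hk =>
          have : k = n + 1 := by omega
          subst this
          rw [e1, mul_one]
        | (m + 2), hk =>
          have hkn : k ≤ n := by omega
          have eq1 := hrel ⟨k, by omega⟩
          have eq2 := hrel' ⟨k, by omega⟩
          have ih1 := ih (m + 1) (by omega) (k + 1) (by omega)
          have ih2 := ih m (by omega) (k + 2) (by omega)
          simp only at eq1 eq2
          linear_combination eq1 + q ⟨k, by omega⟩ * ih1 + ih2 - r (n + 1) * eq2
    have ha : a = r (n + 1) * r' 0 := by rw [← h0]; exact H (n + 2) 0 (by omega)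
    have hb : b = r (n + 1) * r' 1 := by rw [← h1]; exact H (n + 1) 1 (by omega)
    obtain ⟨s, t, hst⟩ := h
    have hst' : s * a + t * b = 1 := by simpa using hst
    have hunit : IsUnit (r (n + 1)) := by
      refine IsUnit.of_mul_eq_one (s * r' 0 + t * r' 1) ?_
      rw [ha, hb] at hst'
      linear_combination hst'
    obtain ⟨u, hu⟩ := hunit
    refine ⟨n, q, ?_⟩
    rw [vertexMul, vInf, Quotient.map_mk]
    refine Quotient.sound ⟨u⁻¹, ?_⟩
    show (↑u⁻¹ : A) • ![a, b] =
      vecMul ![(1:A), 0] ((wordProd Sgl q : GL (Fin 2) A) : Matrix (Fin 2) (Fin 2) A)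
    rw [hvec]
    funext i
    fin_cases i <;>
      simp [ha, hb, ← hu, ← mul_assoc]
end

section
/- If A is a Euclidean domain, then the graph Γ(A) is connected. -/
open Matrix

lemma reach_aux {A : Type*} [EuclideanDomain A] :
    ∀ b a : A, ∀ h : IsUnimod ![a, b],
      (GammaGraph A).Reachable (vInf A) ⟦(⟨![a, b], h⟩ : UnimodRow A)⟧ := by
  intro b
  refine EuclideanDomain.r_wellFounded.induction
    (C := fun b => ∀ a : A, ∀ h : IsUnimod ![a, b],
      (GammaGraph A).Reachable (vInf A) ⟦(⟨![a, b], h⟩ : UnimodRow A)⟧) b ?_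
  intro b ih a h
  obtain ⟨r, s, hrs⟩ := h
  simp only [Matrix.cons_val_zero, Matrix.cons_val_one, Matrix.head_cons] at hrs
  by_cases hb : b = 0
  · subst hb
    have ha : r * a = 1 := by linear_combination hrs
    have hu : IsUnimod ![a, 0] := ⟨r, s, by
      simpa only [Matrix.cons_val_zero, Matrix.cons_val_one, Matrix.head_cons] using hrs⟩
    have he : vInf A = (⟦(⟨![a, 0], hu⟩ : UnimodRow A)⟧ : Vertex A) :=
      Quotient.sound ⟨⟨a, r, by linear_combination ha, ha⟩, by
        funext i; fin_cases i <;> simp⟩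
    exact he ▸ SimpleGraph.Reachable.refl _
  · have hmod : r % b = r - b * (r / b) := by
      have := EuclideanDomain.div_add_mod r b
      linear_combination this
    have key : (r % b) * a + (s + (r / b) * a) * b = 1 := by
      rw [hmod]; linear_combination hrs
    have hw : IsUnimod ![-(s + (r / b) * a), r % b] := by
      refine ⟨-b, a, ?_⟩
      simp only [Matrix.cons_val_zero, Matrix.cons_val_one, Matrix.head_cons]
      linear_combination key
    have hreach := ih (r % b) (EuclideanDomain.mod_lt r hb) (-(s + (r / b) * a)) hw
    set w : UnimodRow A := ⟨![-(s + (r / b) * a), r % b], hw⟩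
    set x : UnimodRow A := ⟨![a, b], ⟨r, s, by
      simpa only [Matrix.cons_val_zero, Matrix.cons_val_one, Matrix.head_cons] using hrs⟩⟩
    by_cases heq : (⟦w⟧ : Vertex A) = ⟦x⟧
    · exact heq ▸ hreach
    · have hadj : (GammaGraph A).Adj ⟦w⟧ ⟦x⟧ := by
        refine ⟨heq, w, x, rfl, rfl, ?_⟩
        have : w.1 0 * x.1 1 - w.1 1 * x.1 0 = -1 := by
          show (-(s + (r / b) * a)) * b - (r % b) * a = -1
          linear_combination -key
        rw [this]
        exact isUnit_one.neg
      exact hreach.trans hadj.reachable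

/-- If A is a Euclidean domain then Γ(A) is connected. -/
theorem stmt10 (A : Type*) [EuclideanDomain A] : (GammaGraph A).Connected := by
  have hpre : (GammaGraph A).Preconnected := by
    have hall : ∀ x : Vertex A, (GammaGraph A).Reachable (vInf A) x := by
      intro x
      induction x using Quotient.ind with
      | _ v =>
        have hveq : (v.1 : Fin 2 → A) = ![v.1 0, v.1 1] := by
          funext i; fin_cases i <;> rfl
        have hv : v = (⟨![v.1 0, v.1 1], hveq ▸ v.2⟩ : UnimodRow A) := Subtype.ext hveq
        rw [hv]
        exact reach_aux (v.1 1) (v.1 0) _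
    intro x y
    exact (hall x).symm.trans (hall y)
  have : Nonempty (Vertex A) := ⟨vInf A⟩
  exact ⟨hpre⟩
end

section
/- Let A be a commutative ring, a₁, …, aₙ ∈ A, and β = β(u,c) ∈ 𝔹 ⊆ C(A) with unit u = u(β). Define b₁ := a₁u² + cu·u = a₁·β (the action of β on a₁) and bᵢ := u^{(−1)^{i−1}·2} aᵢ for 2 ≤ i ≤ n. Then for every 1 ≤ i ≤ n, ε(bᵢ)ε(bᵢ₋₁)···ε(b₁) = h(u)^{(−1)^{i−1}} ε(aᵢ)ε(aᵢ₋₁)···ε(a₁) β in C(A), and b₁, …, bₙ are the unique elements of A with this property. -/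
open Matrix

/-- The word `h(u) = ε(-u)ε(-u⁻¹)ε(-u)` in the free group on the symbols `ε(a)`, `a ∈ A`. -/
def hFree {A : Type*} [CommRing A] (u : Aˣ) : FreeGroup A :=
  FreeGroup.of (-(u : A)) * FreeGroup.of (-((u⁻¹ : Aˣ) : A)) * FreeGroup.of (-(u : A))

/-- The defining relations of Cohn's group C(A). -/
def CRels (A : Type*) [CommRing A] : Set (FreeGroup A) :=
  {x | ∃ u v : Aˣ, x = hFree u * hFree v * (hFree (u * v))⁻¹} ∪
  {x | ∃ a b : A, x = FreeGroup.of a * FreeGroup.of (0 : A) * FreeGroup.of b *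
      (hFree (-1) * FreeGroup.of (a + b))⁻¹} ∪
  {x | ∃ (u : Aˣ) (a : A), x = hFree u * FreeGroup.of a * hFree u *
      (FreeGroup.of ((u : A) ^ 2 * a))⁻¹}

/-- Cohn's group C(A), presented by generators ε(a), a ∈ A, and the three families of
relations h(u)h(v) = h(uv), ε(a)ε(0)ε(b) = h(-1)ε(a+b), h(u)ε(a)h(u) = ε(u²a). -/
abbrev CGroup (A : Type*) [CommRing A] := PresentedGroup (CRels A)

/-- The generator ε(a) of C(A). -/
def epsC {A : Type*} [CommRing A] (a : A) : CGroup A := PresentedGroup.of a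

/-- h(u) = ε(-u)ε(-u⁻¹)ε(-u) in C(A). -/
def hC {A : Type*} [CommRing A] (u : Aˣ) : CGroup A :=
  epsC (-(u : A)) * epsC (-((u⁻¹ : Aˣ) : A)) * epsC (-(u : A))

/-- y(a) = ε(0)³ε(a) in C(A). -/
def yC {A : Type*} [CommRing A] (a : A) : CGroup A := (epsC (0 : A)) ^ 3 * epsC a

/-- ȳ(a) = ε(-a)ε(0)³ in C(A). -/
def ybarC {A : Type*} [CommRing A] (a : A) : CGroup A := epsC (-a) * (epsC (0 : A)) ^ 3

/-- β(u,a) = h(u)y(ua) in C(A). -/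
def betaC {A : Type*} [CommRing A] (u : Aˣ) (a : A) : CGroup A := hC u * yC ((u : A) * a)

/-- E(a) = [[a,1],[-1,0]] as an element of SL₂. -/
def ESL {A : Type*} [CommRing A] (a : A) : Matrix.SpecialLinearGroup (Fin 2) A :=
  ⟨!![a, 1; -1, 0], by simp [Matrix.det_fin_two_of]⟩

/-- D(u) = diag(u, u⁻¹) as an element of SL₂. -/
def DSL {A : Type*} [CommRing A] (u : Aˣ) : Matrix.SpecialLinearGroup (Fin 2) A :=
  ⟨!![(u : A), 0; 0, ((u⁻¹ : Aˣ) : A)], by simp [Matrix.det_fin_two_of]⟩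

theorem ESL_h {A : Type*} [CommRing A] (u : Aˣ) :
    ESL (-(u : A)) * ESL (-((u⁻¹ : Aˣ) : A)) * ESL (-(u : A)) = DSL u := by
  apply Subtype.ext
  show (!![-(u:A), 1; -1, 0] * !![-((u⁻¹:Aˣ):A), 1; -1, 0]) * !![-(u:A), 1; -1, 0] = _
  ext i j
  fin_cases i <;> fin_cases j <;>
    simp [DSL, Matrix.mul_apply, Fin.sum_univ_two]

theorem DSL_mul {A : Type*} [CommRing A] (u v : Aˣ) : DSL u * DSL v = DSL (u * v) := by
  apply Subtype.ext
  show (!![(u:A), 0; 0, ((u⁻¹:Aˣ):A)] * !![(v:A), 0; 0, ((v⁻¹:Aˣ):A)]) = _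
  ext i j
  fin_cases i <;> fin_cases j <;>
    simp [DSL, Matrix.mul_apply, Fin.sum_univ_two, mul_comm]

theorem ESL_rel2 {A : Type*} [CommRing A] (a b : A) :
    ESL a * ESL (0 : A) * ESL b = DSL (-1) * ESL (a + b) := by
  apply Subtype.ext
  show (!![a, 1; -1, 0] * !![(0:A), 1; -1, 0]) * !![b, 1; -1, 0] =
    ((DSL (-1) : Matrix.SpecialLinearGroup (Fin 2) A) : Matrix (Fin 2) (Fin 2) A) *
      ((ESL (a + b) : Matrix.SpecialLinearGroup (Fin 2) A) : Matrix (Fin 2) (Fin 2) A)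
  ext i j
  fin_cases i <;> fin_cases j <;>
    simp [DSL, ESL, Matrix.mul_apply, Fin.sum_univ_two]

theorem ESL_rel3 {A : Type*} [CommRing A] (u : Aˣ) (a : A) :
    DSL u * ESL a * DSL u = ESL ((u : A) ^ 2 * a) := by
  apply Subtype.ext
  show (!![(u:A), 0; 0, ((u⁻¹:Aˣ):A)] * !![a, 1; -1, 0]) * !![(u:A), 0; 0, ((u⁻¹:Aˣ):A)] = _
  ext i j
  fin_cases i <;> fin_cases j <;>
    simp [ESL, Matrix.mul_apply, Fin.sum_univ_two] <;> ring

theorem lift_hFree {A : Type*} [CommRing A] (u : Aˣ) :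
    FreeGroup.lift (fun a : A => ESL a) (hFree u) = DSL u := by
  simp only [hFree, _root_.map_mul, FreeGroup.lift_apply_of]
  exact ESL_h u

theorem CRels_liftable {A : Type*} [CommRing A] :
    ∀ r ∈ CRels A, FreeGroup.lift (fun a : A => ESL a) r = 1 := by
  rintro r ((⟨u, v, rfl⟩ | ⟨a, b, rfl⟩) | ⟨u, a, rfl⟩)
  · rw [_root_.map_mul, _root_.map_mul, map_inv, lift_hFree, lift_hFree, lift_hFree, DSL_mul,
      mul_inv_cancel]
  · simp only [_root_.map_mul, map_inv, FreeGroup.lift_apply_of, lift_hFree]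
    rw [ESL_rel2, mul_inv_cancel]
  · simp only [_root_.map_mul, map_inv, FreeGroup.lift_apply_of, lift_hFree]
    rw [ESL_rel3, mul_inv_cancel]

/-- The homomorphism ψ : C(A) → SL₂(A) with ψ(ε(a)) = E(a). -/
def psiC (A : Type*) [CommRing A] : CGroup A →* Matrix.SpecialLinearGroup (Fin 2) A :=
  PresentedGroup.toGroup CRels_liftable

@[simp] theorem psiC_epsC {A : Type*} [CommRing A] (a : A) : psiC A (epsC a) = ESL a :=
  PresentedGroup.toGroup.of _

section Lemmas

variable {A : Type*} [CommRing A]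

theorem relC_one {r : FreeGroup A} (hr : r ∈ CRels A) :
    PresentedGroup.mk (CRels A) r = 1 :=
  (QuotientGroup.eq_one_iff r).mpr (Subgroup.subset_normalClosure hr)

theorem mk_hFree (u : Aˣ) : PresentedGroup.mk (CRels A) (hFree u) = hC u := rfl

theorem hC_mul (u v : Aˣ) : hC u * hC v = hC (u * v) := by
  have h := relC_one (Or.inl (Or.inl ⟨u, v, rfl⟩))
  simp only [_root_.map_mul, map_inv, mk_hFree] at h
  exact mul_inv_eq_one.mp h

theorem rel2C (a b : A) :
    epsC a * epsC (0 : A) * epsC b = hC (-1) * epsC (a + b) := by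
  have h := relC_one (Or.inl (Or.inr ⟨a, b, rfl⟩))
  simp only [_root_.map_mul, map_inv, mk_hFree] at h
  exact mul_inv_eq_one.mp h

theorem rel3C (u : Aˣ) (a : A) :
    hC u * epsC a * hC u = epsC ((u : A) ^ 2 * a) := by
  have h := relC_one (Or.inr ⟨u, a, rfl⟩)
  simp only [_root_.map_mul, map_inv, mk_hFree] at h
  exact mul_inv_eq_one.mp h

theorem hC_one : hC (1 : Aˣ) = 1 := by
  have := hC_mul (1 : Aˣ) 1
  rw [mul_one] at this
  exact right_eq_mul.mp this.symm

theorem hC_neg_one_sq : hC (-1 : Aˣ) * hC (-1 : Aˣ) = 1 := by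
  rw [hC_mul]; norm_num [hC_one]

theorem eps0_sq : epsC (0 : A) ^ 2 = hC (-1 : Aˣ) := by
  have h := rel2C (0 : A) 0
  rw [add_zero] at h
  have := mul_right_cancel h
  rw [← this, pow_two]

theorem hC_neg_one_comm (a : A) : hC (-1 : Aˣ) * epsC a = epsC a * hC (-1 : Aˣ) := by
  have h := rel3C (-1 : Aˣ) a
  have h2 : ((-1 : Aˣ) : A) ^ 2 * a = a := by norm_num
  rw [h2] at h
  calc hC (-1 : Aˣ) * epsC a
      = hC (-1 : Aˣ) * epsC a * (hC (-1 : Aˣ) * hC (-1 : Aˣ)) := by rw [hC_neg_one_sq, mul_one]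
    _ = (hC (-1 : Aˣ) * epsC a * hC (-1 : Aˣ)) * hC (-1 : Aˣ) := by group
    _ = epsC a * hC (-1 : Aˣ) := by rw [h]

theorem eps_add (a b : A) : epsC a * epsC (0 : A) ^ 3 * epsC b = epsC (a + b) := by
  have h3 : epsC (0 : A) ^ 3 = epsC (0 : A) * hC (-1 : Aˣ) := by
    rw [← eps0_sq, pow_succ, pow_two, mul_assoc]
  rw [h3, show epsC a * (epsC (0:A) * hC (-1:Aˣ)) * epsC b
      = epsC a * epsC (0:A) * (hC (-1:Aˣ) * epsC b) by group,
    hC_neg_one_comm, ← mul_assoc, rel2C, mul_assoc, ← hC_neg_one_comm, ← mul_assoc,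
    hC_neg_one_sq, one_mul]

theorem eps_inv_sq (u : Aˣ) (a : A) :
    epsC (((u⁻¹ : Aˣ) : A) ^ 2 * a) = (hC u)⁻¹ * epsC a * (hC u)⁻¹ := by
  have h := rel3C u (((u⁻¹ : Aˣ) : A) ^ 2 * a)
  have h2 : (u : A) ^ 2 * (((u⁻¹ : Aˣ) : A) ^ 2 * a) = a := by
    have : (u : A) * ((u⁻¹ : Aˣ) : A) = 1 := u.mul_inv
    rw [← mul_assoc, ← mul_pow, this]; simp
  rw [h2] at h
  rw [← h]; group

theorem epsC_injective : Function.Injective (epsC : A → CGroup A) := by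
  intro x y h
  have h2 := congrArg (psiC A) h
  simp only [psiC_epsC] at h2
  have h3 := congrArg (fun M : Matrix.SpecialLinearGroup (Fin 2) A => M.1 0 0) h2
  simpa [ESL] using h3

end Lemmas

theorem wordProd_zero {A G : Type*} [Monoid G] (f : A → G) (a : Fin 0 → A) :
    wordProd f a = 1 := rfl

theorem wordProd_succ {A G : Type*} [Monoid G] (f : A → G) {n : ℕ} (a : Fin (n + 1) → A) :
    wordProd f a = f (a (Fin.last n)) * wordProd f (fun j : Fin n => a j.castSucc) := rfl

/-- Let β = β(u,c) ∈ 𝔹 ⊆ C(A) and a₁,…,aₙ ∈ A.  With b₁ := a₁u² + cu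
(= a₁·β) and bᵢ := u^{(-1)^{i-1}·2}aᵢ for i ≥ 2, one has
ε(bᵢ)⋯ε(b₁) = h(u)^{(-1)^{i-1}} ε(aᵢ)⋯ε(a₁) β for all 1 ≤ i ≤ n, and b₁,…,bₙ are the
unique elements of A with this property.  (Indices are 0-based.) -/
theorem stmt16 (A : Type*) [CommRing A] (n : ℕ) (a : Fin n → A) (u : Aˣ) (c : A)
    (b : Fin n → A)
    (hb : ∀ i : Fin n, b i =
      if i.1 = 0 then a i * (u : A) ^ 2 + c * (u : A)
      else if Even i.1 then (u : A) ^ 2 * a i else ((u⁻¹ : Aˣ) : A) ^ 2 * a i) :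
    (∀ i : Fin n,
      wordProd epsC (fun j : Fin (i.1 + 1) => b (Fin.castLE i.isLt j)) =
        (hC u) ^ ((-1 : ℤ) ^ i.1) *
          wordProd epsC (fun j : Fin (i.1 + 1) => a (Fin.castLE i.isLt j)) * betaC u c) ∧
    (∀ b' : Fin n → A,
      (∀ i : Fin n,
        wordProd epsC (fun j : Fin (i.1 + 1) => b' (Fin.castLE i.isLt j)) =
          (hC u) ^ ((-1 : ℤ) ^ i.1) *
            wordProd epsC (fun j : Fin (i.1 + 1) => a (Fin.castLE i.isLt j)) * betaC u c) →
      b' = b) := by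
  have base : ∀ i0 : Fin n, i0.1 = 0 →
      epsC (b i0) = hC u * epsC (a i0) * betaC u c := by
    intro i0 h0
    have h1 : hC u * epsC (a i0) * betaC u c = epsC ((u : A) ^ 2 * a i0 + (u : A) * c) := by
      rw [betaC, yC, ← eps_add, ← rel3C]
      group
    rw [h1, hb i0, if_pos h0]
    congr 1
    ring
  have step : ∀ (i0 : Fin n) (k : ℕ), i0.1 = k + 1 →
      epsC (b i0) * hC u ^ ((-1 : ℤ) ^ k) =
        hC u ^ ((-1 : ℤ) ^ (k + 1)) * epsC (a i0) := by
    intro i0 k hk1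
    have hbi := hb i0
    rw [hk1, if_neg (Nat.succ_ne_zero k)] at hbi
    rcases Nat.even_or_odd k with he | ho
    · rw [if_neg (by simp [Nat.even_add_one, he])] at hbi
      rw [he.neg_one_pow, (he.add_one).neg_one_pow, zpow_one, _root_.zpow_neg_one, hbi, eps_inv_sq]
      group
    · rw [if_pos (Nat.even_add_one.mpr ((Nat.not_even_iff_odd).mpr ho))] at hbi
      rw [ho.neg_one_pow, (ho.add_one).neg_one_pow, zpow_one, _root_.zpow_neg_one, hbi, ← rel3C]
      group
  have part1 : ∀ (k : ℕ) (hk : k < n),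
      wordProd epsC (fun j : Fin (k + 1) => b (Fin.castLE hk j)) =
        hC u ^ ((-1 : ℤ) ^ k) *
          wordProd epsC (fun j : Fin (k + 1) => a (Fin.castLE hk j)) * betaC u c := by
    intro k
    induction k with
    | zero =>
      intro hk
      simp only [wordProd_succ, wordProd_zero, mul_one, pow_zero, zpow_one]
      exact base _ rfl
    | succ k ih =>
      intro hk
      have hk' : k < n := Nat.lt_of_succ_lt hk
      have e1 : (fun j : Fin (k + 1) => b (Fin.castLE hk j.castSucc)) =
          fun j : Fin (k + 1) => b (Fin.castLE hk' j) := by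
        funext j; exact congrArg b (Fin.ext rfl)
      have e2 : (fun j : Fin (k + 1) => a (Fin.castLE hk j.castSucc)) =
          fun j : Fin (k + 1) => a (Fin.castLE hk' j) := by
        funext j; exact congrArg a (Fin.ext rfl)
      have hWb : wordProd epsC (fun j : Fin (k + 1 + 1) => b (Fin.castLE hk j)) =
          epsC (b (Fin.castLE hk (Fin.last (k + 1)))) *
            wordProd epsC (fun j : Fin (k + 1) => b (Fin.castLE hk j.castSucc)) := rfl
      have hWa : wordProd epsC (fun j : Fin (k + 1 + 1) => a (Fin.castLE hk j)) =
          epsC (a (Fin.castLE hk (Fin.last (k + 1)))) *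
            wordProd epsC (fun j : Fin (k + 1) => a (Fin.castLE hk j.castSucc)) := rfl
      rw [hWb, hWa, e1, e2, ih hk']
      have hs := step (Fin.castLE hk (Fin.last (k + 1))) k rfl
      rw [← mul_assoc, ← mul_assoc, hs]
      simp only [mul_assoc]
  refine ⟨fun i => part1 i.1 i.isLt, ?_⟩
  intro b' H
  have words : ∀ (k : ℕ) (hk : k < n),
      wordProd epsC (fun j : Fin (k + 1) => b' (Fin.castLE hk j)) =
        wordProd epsC (fun j : Fin (k + 1) => b (Fin.castLE hk j)) :=
    fun k hk => (H ⟨k, hk⟩).trans (part1 k hk).symm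
  funext i
  rcases i with ⟨iv, hiv⟩
  apply epsC_injective
  cases iv with
  | zero =>
    have hw := words 0 hiv
    simp only [wordProd_succ, wordProd_zero, mul_one] at hw
    exact hw
  | succ k =>
    have hk' : k < n := Nat.lt_of_succ_lt hiv
    have hw := words (k + 1) hiv
    have e1 : (fun j : Fin (k + 1) => b' (Fin.castLE hiv j.castSucc)) =
        fun j : Fin (k + 1) => b' (Fin.castLE hk' j) := by
      funext j; exact congrArg b' (Fin.ext rfl)
    have e2 : (fun j : Fin (k + 1) => b (Fin.castLE hiv j.castSucc)) =
        fun j : Fin (k + 1) => b (Fin.castLE hk' j) := by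
      funext j; exact congrArg b (Fin.ext rfl)
    have hWb' : wordProd epsC (fun j : Fin (k + 1 + 1) => b' (Fin.castLE hiv j)) =
        epsC (b' (Fin.castLE hiv (Fin.last (k + 1)))) *
          wordProd epsC (fun j : Fin (k + 1) => b' (Fin.castLE hiv j.castSucc)) := rfl
    have hWb : wordProd epsC (fun j : Fin (k + 1 + 1) => b (Fin.castLE hiv j)) =
        epsC (b (Fin.castLE hiv (Fin.last (k + 1)))) *
          wordProd epsC (fun j : Fin (k + 1) => b (Fin.castLE hiv j.castSucc)) := rfl
    rw [hWb', hWb, e1, e2, words k hk'] at hw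
    exact mul_right_cancel hw
end
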